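/- Let H₁, H₂ ∈ ℂ^{m×n}, r ∈ ℂ^m, and let W be an m×m diagonal matrix with real nonnegative diagonal entries w_i. Suppose there is an involution σ of {1,…,m} such that for every i, the σ(i)-th row of H₁ equals the conjugate of the i-th row of H₂, the σ(i)-th row of H₂ equals the conjugate of the i-th row of H₁, r_{σ(i)} = conj(r_i), and w_{σ(i)} = w_i. Let J₁, J₂ ∈ ℂ^{p×n}, s ∈ ℂ^p, and suppose the ℝ-linear map v ↦ J₁v + J₂(conj v) from ℂ^n to ℂ^p is surjective. Define β_x̄ = (conj H₁)ᵀW r, G_{x̄x} = (conj H₁)ᵀW H₁, G_{x̄x̄} = (conj H₁)ᵀW H₂. If v ∈ ℂ^n satisfies J₁v + J₂(conj v) = −s and v minimizes the objective ℓ over the feasible set F = {u ∈ ℂ^n : J₁u + J₂(conj u) = −s}, then there exists λ ∈ ℂ^p such that G_{x̄x}v + G_{x̄x̄}(conj v) + (conj J₁)ᵀλ + J₂ᵀ(conj λ) = β_x̄. -/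

import Mathlib

open Matrix BigOperators ComplexOrder

/-- Necessity direction of Theorem 1: if the ℝ-linear constraint map
`v ↦ J₁ v + J₂ (conj v)` is surjective and `v` is a feasible minimizer of the
objective `ℓ(u) = ½ (conj ρ(u))ᵀ W ρ(u)`, `ρ(u) = r - H₁ u - H₂ (conj u)`,
over the feasible set `{u : J₁ u + J₂ (conj u) = -s}`, then there exists a
Lagrange multiplier `λ` with
`G_{x̄x} v + G_{x̄x̄} (conj v) + (conj J₁)ᵀ λ + J₂ᵀ (conj λ) = β_x̄`. -/
theorem cec_stationarity_necessary (m n p : ℕ)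
    (H₁ H₂ : Matrix (Fin m) (Fin n) ℂ) (r : Fin m → ℂ)
    (w : Fin m → ℝ) (hw : ∀ i, 0 ≤ w i)
    (σ : Fin m → Fin m) (hσ : ∀ i, σ (σ i) = i)
    (hH₁ : ∀ i, H₁ (σ i) = star (H₂ i))
    (hH₂ : ∀ i, H₂ (σ i) = star (H₁ i))
    (hr : ∀ i, r (σ i) = star (r i))
    (hw' : ∀ i, w (σ i) = w i)
    (J₁ J₂ : Matrix (Fin p) (Fin n) ℂ) (s : Fin p → ℂ)
    (hsurj : Function.Surjective fun v : Fin n → ℂ => J₁ *ᵥ v + J₂ *ᵥ star v)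
    (W : Matrix (Fin m) (Fin m) ℂ)
    (hW : W = Matrix.diagonal fun i => (w i : ℂ))
    (βxb : Fin n → ℂ) (hβxb : βxb = H₁ᴴ *ᵥ (W *ᵥ r))
    (Gxbx Gxbxb : Matrix (Fin n) (Fin n) ℂ)
    (hGxbx : Gxbx = H₁ᴴ * W * H₁)
    (hGxbxb : Gxbxb = H₁ᴴ * W * H₂)
    (v : Fin n → ℂ)
    (hfeas : J₁ *ᵥ v + J₂ *ᵥ star v = -s)
    (hmin : ∀ u : Fin n → ℂ, J₁ *ᵥ u + J₂ *ᵥ star u = -s →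
      (1 / 2 : ℂ) *
          (star (r - H₁ *ᵥ v - H₂ *ᵥ star v) ⬝ᵥ
            (W *ᵥ (r - H₁ *ᵥ v - H₂ *ᵥ star v)))
        ≤ (1 / 2 : ℂ) *
          (star (r - H₁ *ᵥ u - H₂ *ᵥ star u) ⬝ᵥ
            (W *ᵥ (r - H₁ *ᵥ u - H₂ *ᵥ star u)))) :
    ∃ lam : Fin p → ℂ,
      Gxbx *ᵥ v + Gxbxb *ᵥ star v + J₁ᴴ *ᵥ lam + J₂ᵀ *ᵥ star lam = βxb := by
  classical
  set ρ : Fin m → ℂ := r - H₁ *ᵥ v - H₂ *ᵥ star v with hρdef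
  have hWapp : ∀ (x : Fin m → ℂ) (i : Fin m), (W *ᵥ x) i = (w i : ℂ) * x i := by
    intro x i; rw [hW, Matrix.mulVec_diagonal]
  set g : Fin n → ℂ := fun j => ∑ i, star (H₁ i j) * ((w i : ℂ) * ρ i) with hgdef
  have hWv : ∀ x : Fin m → ℂ, W *ᵥ x = fun i => (w i : ℂ) * x i := fun x => funext (hWapp x)
  have hgeq : H₁ᴴ *ᵥ (W *ᵥ ρ) = g := by
    funext j
    rw [hWv ρ]
    simp [Matrix.mulVec, dotProduct, Matrix.conjTranspose_apply, hgdef]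
  -- reduce the goal to producing `lam` with `J₁ᴴ *ᵥ lam + J₂ᵀ *ᵥ star lam = g`
  suffices h : ∃ lam : Fin p → ℂ, J₁ᴴ *ᵥ lam + J₂ᵀ *ᵥ star lam = g by
    obtain ⟨lam, hl⟩ := h
    refine ⟨lam, ?_⟩
    have e1 : (H₁ᴴ * W * H₁) *ᵥ v = H₁ᴴ *ᵥ (W *ᵥ (H₁ *ᵥ v)) := by
      rw [Matrix.mulVec_mulVec, Matrix.mulVec_mulVec, Matrix.mul_assoc]
    have e2 : (H₁ᴴ * W * H₂) *ᵥ star v = H₁ᴴ *ᵥ (W *ᵥ (H₂ *ᵥ star v)) := by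
      rw [Matrix.mulVec_mulVec, Matrix.mulVec_mulVec, Matrix.mul_assoc]
    rw [hβxb, hGxbx, hGxbxb, add_assoc, hl, e1, e2, ← hgeq, hρdef, Matrix.mulVec_sub,
      Matrix.mulVec_sub, Matrix.mulVec_sub, Matrix.mulVec_sub]
    abel
  -- symmetry of the residual under σ
  have hρσ : ∀ i, ρ (σ i) = star (ρ i) := by
    intro i
    have e1 : (H₁ *ᵥ v) (σ i) = star ((H₂ *ᵥ star v) i) := by
      simp only [Matrix.mulVec, dotProduct, hH₁ i, Pi.star_apply, star_sum, star_mul',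
        star_star]
    have e2 : (H₂ *ᵥ star v) (σ i) = star ((H₁ *ᵥ v) i) := by
      simp only [Matrix.mulVec, dotProduct, hH₂ i, Pi.star_apply, star_sum, star_mul',
        star_star]
    simp only [hρdef, Pi.sub_apply, e1, e2, hr i, star_sub]
    ring
  -- the σ-reindexing identity
  have hσg : ∀ j, ∑ i, H₂ i j * ((w i : ℂ) * star (ρ i)) = g j := by
    intro j
    rw [hgdef]
    rw [← Equiv.sum_comp (Function.Involutive.toPerm σ hσ)
        (fun i => H₂ i j * ((w i : ℂ) * star (ρ i)))]
    refine Finset.sum_congr rfl fun i _ => ?_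
    simp only [Function.Involutive.coe_toPerm, Function.Involutive.toPerm, Equiv.coe_fn_mk, hH₂ i, hw' i, hρσ i, star_star, Pi.star_apply]
  have hstarg : ∀ j, star (g j) = ∑ i, H₁ i j * ((w i : ℂ) * star (ρ i)) := by
    intro j
    rw [hgdef]
    rw [star_sum]
    refine Finset.sum_congr rfl fun i _ => ?_
    simp [star_mul', star_star]
  have hA1 : ∀ d : Fin n → ℂ, star ρ ⬝ᵥ (W *ᵥ (H₁ *ᵥ d)) = star g ⬝ᵥ d := by
    intro d
    rw [hWv]
    have e : star ρ ⬝ᵥ (fun i => (w i : ℂ) * (H₁ *ᵥ d) i)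
        = ∑ i, ∑ j, star (ρ i) * ((w i : ℂ) * (H₁ i j * d j)) := by
      simp only [dotProduct, Matrix.mulVec, Pi.star_apply, Finset.mul_sum]
    rw [e, Finset.sum_comm]
    simp only [dotProduct, Pi.star_apply]
    refine Finset.sum_congr rfl fun j _ => ?_
    rw [hstarg j, Finset.sum_mul]
    refine Finset.sum_congr rfl fun i _ => ?_
    ring
  have hA2 : ∀ d : Fin n → ℂ, star ρ ⬝ᵥ (W *ᵥ (H₂ *ᵥ star d)) = star (star g ⬝ᵥ d) := by
    intro d
    have e0 : star (star g ⬝ᵥ d) = ∑ j, g j * star (d j) := by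
      simp only [dotProduct, star_sum, Pi.star_apply, star_mul', star_star]
    rw [e0, hWv]
    have e : star ρ ⬝ᵥ (fun i => (w i : ℂ) * (H₂ *ᵥ star d) i)
        = ∑ i, ∑ j, star (ρ i) * ((w i : ℂ) * (H₂ i j * star (d j))) := by
      simp only [dotProduct, Matrix.mulVec, Pi.star_apply, Finset.mul_sum]
    rw [e, Finset.sum_comm]
    refine Finset.sum_congr rfl fun j _ => ?_
    rw [← hσg j, Finset.sum_mul]
    refine Finset.sum_congr rfl fun i _ => ?_
    ring
  have hsym : ∀ x y : Fin m → ℂ, star x ⬝ᵥ (W *ᵥ y) = star (star y ⬝ᵥ (W *ᵥ x)) := by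
    intro x y
    rw [hWv, hWv]
    simp only [dotProduct, Pi.star_apply, star_sum, star_mul', star_star]
    refine Finset.sum_congr rfl fun i _ => ?_
    simp only [Complex.star_def, Complex.conj_ofReal]
    ring
  have hQnn : ∀ h : Fin m → ℂ, 0 ≤ (star h ⬝ᵥ (W *ᵥ h)).re := by
    intro h
    rw [hWv]
    simp only [dotProduct, Pi.star_apply, Complex.re_sum]
    refine Finset.sum_nonneg fun i _ => ?_
    simp only [Complex.mul_re, Complex.mul_im, Complex.star_def, Complex.conj_re,
      Complex.conj_im, Complex.ofReal_re, Complex.ofReal_im, zero_mul, sub_zero, add_zero]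
    nlinarith [hw i, sq_nonneg (h i).re, sq_nonneg (h i).im]
  -- gradient vanishes on the kernel of the constraint map
  have hker : ∀ d : Fin n → ℂ, J₁ *ᵥ d + J₂ *ᵥ star d = 0 → (star g ⬝ᵥ d).re = 0 := by
    intro d hd
    set z : ℂ := star g ⬝ᵥ d with hz
    set h : Fin m → ℂ := H₁ *ᵥ d + H₂ *ᵥ star d with hh
    set Q : ℝ := (star h ⬝ᵥ (W *ᵥ h)).re with hQ
    have hQ0 : 0 ≤ Q := hQnn h
    have key : ∀ t : ℝ, 4 * t * z.re ≤ t ^ 2 * Q := by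
      intro t
      have hst : star ((t : ℝ) : ℂ) = ((t : ℝ) : ℂ) := by
        simp
      have hfeas' : J₁ *ᵥ (v + (t : ℂ) • d) + J₂ *ᵥ star (v + (t : ℂ) • d) = -s := by
        calc J₁ *ᵥ (v + (t : ℂ) • d) + J₂ *ᵥ star (v + (t : ℂ) • d)
            = (J₁ *ᵥ v + J₂ *ᵥ star v) + (t : ℂ) • (J₁ *ᵥ d + J₂ *ᵥ star d) := by
              simp only [star_add, star_smul, hst, Matrix.mulVec_add, Matrix.mulVec_smul,
                smul_add]
              abel
          _ = -s := by rw [hfeas, hd, smul_zero, add_zero]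
      have hρu : r - H₁ *ᵥ (v + (t : ℂ) • d) - H₂ *ᵥ star (v + (t : ℂ) • d)
          = ρ - (t : ℂ) • h := by
        rw [hρdef, hh]
        simp only [star_add, star_smul, hst, Matrix.mulVec_add, Matrix.mulVec_smul, smul_add]
        abel
      have hAzz : star ρ ⬝ᵥ (W *ᵥ h) = z + star z := by
        rw [hh, Matrix.mulVec_add, dotProduct_add, hA1 d, hA2 d]
      have hB : star h ⬝ᵥ (W *ᵥ ρ) = z + star z := by
        rw [hsym h ρ, hAzz, star_add, star_star, add_comm]
      have hexp : star (ρ - (t : ℂ) • h) ⬝ᵥ (W *ᵥ (ρ - (t : ℂ) • h))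
          = star ρ ⬝ᵥ (W *ᵥ ρ) - (t : ℂ) * (2 * (z + star z))
            + (t : ℂ) ^ 2 * (star h ⬝ᵥ (W *ᵥ h)) := by
        simp only [star_sub, star_smul, hst, Matrix.mulVec_sub, Matrix.mulVec_smul,
          sub_dotProduct, dotProduct_sub, smul_dotProduct,
          dotProduct_smul, smul_eq_mul, hAzz, hB]
        ring
      have hle := hmin (v + (t : ℂ) • d) hfeas'
      rw [hρu, hexp] at hle
      have hre := (Complex.le_def.mp hle).1
      have hhalf : ((1:ℂ) / 2) = (((1:ℝ)/2 : ℝ) : ℂ) := by norm_num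
      rw [hhalf] at hre
      have ht2 : ((t : ℂ)) ^ 2 = (((t^2 : ℝ)) : ℂ) := by push_cast; ring
      rw [ht2] at hre
      have e1 : ∀ x : ℂ, ((((1:ℝ)/2 : ℝ) : ℂ) * x).re = (1/2) * x.re := by
        intro x
        simp [Complex.mul_re]
      rw [e1, e1] at hre
      have e2 : (star ρ ⬝ᵥ (W *ᵥ ρ) - (t : ℂ) * (2 * (z + star z))
            + (((t^2 : ℝ)) : ℂ) * (star h ⬝ᵥ (W *ᵥ h))).re
          = (star ρ ⬝ᵥ (W *ᵥ ρ)).re - t * (2 * (2 * z.re)) + t^2 * Q := by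
        simp only [Complex.add_re, Complex.sub_re, Complex.mul_re, Complex.ofReal_re,
          Complex.ofReal_im, Complex.mul_im, zero_mul, sub_zero, Complex.add_im,
          Complex.star_def, Complex.conj_re, Complex.conj_im, Complex.re_ofNat,
          Complex.im_ofNat, hQ]
        ring
      rw [e2] at hre
      linarith
    have hQ1 : (0:ℝ) < Q + 1 := by linarith
    set t : ℝ := z.re / (Q + 1) with htdef
    have htm : t * (Q + 1) = z.re := div_mul_cancel₀ _ (ne_of_gt hQ1)
    have hk := key t
    rw [← htm] at hk
    have hle2 : t ^ 2 ≤ 0 := by nlinarith [sq_nonneg t, mul_nonneg (mul_self_nonneg t) hQ0]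
    have ht0 : t = 0 := by
      have h20 : t ^ 2 = 0 := le_antisymm hle2 (sq_nonneg t)
      exact sq_eq_zero_iff.mp h20
    rw [← htm, ht0, zero_mul]
  -- Step B: construct the multiplier from the surjectivity of the constraint map
  set Tl : (Fin n → ℂ) →ₗ[ℝ] (Fin p → ℂ) :=
    { toFun := fun d => J₁ *ᵥ d + J₂ *ᵥ star d
      map_add' := fun x y => by
        simp only [star_add, Matrix.mulVec_add]
        abel
      map_smul' := fun t x => by
        simp only [star_smul, star_trivial, Matrix.mulVec_smul, smul_add, RingHom.id_apply] }
    with hTl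
  set φl : (Fin n → ℂ) →ₗ[ℝ] ℝ :=
    { toFun := fun d => (star g ⬝ᵥ d).re
      map_add' := fun x y => by
        simp only [dotProduct_add, Complex.add_re]
      map_smul' := fun t x => by
        simp only [dotProduct_smul, RingHom.id_apply, Complex.real_smul,
          Complex.mul_re, Complex.ofReal_re, Complex.ofReal_im, zero_mul, sub_zero,
          smul_eq_mul] }
    with hφl
  have hTlapp : ∀ d, Tl d = J₁ *ᵥ d + J₂ *ᵥ star d := fun d => rfl
  have hφlapp : ∀ d, φl d = (star g ⬝ᵥ d).re := fun d => rfl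
  have hφker : ∀ d, Tl d = 0 → φl d = 0 := by
    intro d hd
    exact hker d ((hTlapp d) ▸ hd)
  have hφT : ∀ x y, Tl x = Tl y → φl x = φl y := by
    intro x y hxy
    have h0 : Tl (x - y) = 0 := by rw [map_sub, hxy, sub_self]
    have h1 := hφker _ h0
    rw [map_sub] at h1
    linarith
  set sec : (Fin p → ℂ) → (Fin n → ℂ) := Function.surjInv hsurj with hsec
  have hTsec : ∀ z, Tl (sec z) = z := fun z => Function.surjInv_eq hsurj z
  set c1 : Fin p → ℝ := fun j => φl (sec (Pi.single j 1)) with hc1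
  set c2 : Fin p → ℝ := fun j => φl (sec (Pi.single j Complex.I)) with hc2
  set μ : Fin p → ℂ := fun j => ⟨c1 j, c2 j⟩ with hμ
  have hmain : ∀ d : Fin n → ℂ,
      φl d = ∑ j, (((Tl d) j).re * c1 j + ((Tl d) j).im * c2 j) := by
    intro d
    set y : Fin p → ℂ := Tl d with hy
    set d' : Fin n → ℂ :=
      ∑ j, ((y j).re • sec (Pi.single j 1) + (y j).im • sec (Pi.single j Complex.I))
      with hd'def
    have hTd' : Tl d' = y := by
      rw [hd'def, map_sum]
      simp only [map_add, _root_.map_smul, hTsec]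
      funext k
      simp only [Finset.sum_apply, Pi.add_apply, Pi.smul_apply, Pi.single_apply,
        smul_ite, smul_zero, Finset.sum_add_distrib, Finset.sum_ite_eq, Finset.mem_univ,
        if_true, Complex.real_smul, mul_one]
      exact Complex.re_add_im (y k)
    have heq := hφT d d' (by rw [hTd'])
    rw [heq, hd'def, map_sum]
    refine Finset.sum_congr rfl fun j _ => ?_
    rw [map_add, _root_.map_smul, _root_.map_smul]
    simp only [smul_eq_mul, hc1, hc2]
  refine ⟨μ, ?_⟩
  have hμre : ∀ j, (μ j).re = c1 j := fun j => rfl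
  have hμim : ∀ j, (μ j).im = c2 j := fun j => rfl
  funext k
  have e1 : φl (Pi.single k (1:ℂ)) = (g k).re := by
    rw [hφlapp, dotProduct_single]
    simp [Complex.star_def]
  have e2 : φl (Pi.single k Complex.I) = (g k).im := by
    rw [hφlapp, dotProduct_single]
    simp [Complex.star_def, Complex.mul_re]
  have hs1 : star (Pi.single k (1:ℂ)) = (Pi.single k 1 : Fin n → ℂ) := by
    funext i
    simp [Pi.single_apply, apply_ite (star : ℂ → ℂ)]
  have hs2 : star (Pi.single k Complex.I) = (Pi.single k (-Complex.I) : Fin n → ℂ) := by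
    funext i
    simp [Pi.single_apply, apply_ite (star : ℂ → ℂ), Complex.star_def]
  have eT1 : ∀ j, (Tl (Pi.single k (1:ℂ))) j = J₁ j k + J₂ j k := by
    intro j
    rw [hTlapp, hs1]
    simp [Matrix.mulVec_single]
  have eT2 : ∀ j, (Tl (Pi.single k Complex.I)) j = (J₁ j k - J₂ j k) * Complex.I := by
    intro j
    rw [hTlapp, hs2]
    simp [Matrix.mulVec_single]
    ring
  have h1 := hmain (Pi.single k (1:ℂ))
  rw [e1] at h1
  simp only [eT1] at h1
  have h2 := hmain (Pi.single k Complex.I)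
  rw [e2] at h2
  simp only [eT2] at h2
  have goalform : (J₁ᴴ *ᵥ μ + J₂ᵀ *ᵥ star μ) k
      = ∑ j, (star (J₁ j k) * μ j + J₂ j k * star (μ j)) := by
    simp only [Pi.add_apply, Matrix.mulVec, dotProduct, Matrix.conjTranspose_apply,
      Matrix.transpose_apply, Pi.star_apply, Finset.sum_add_distrib]
  rw [goalform]
  apply Complex.ext
  · rw [Complex.re_sum, h1]
    refine Finset.sum_congr rfl fun j _ => ?_
    simp only [Complex.add_re, Complex.add_im, Complex.mul_re, Complex.mul_im,
      Complex.star_def, Complex.conj_re, Complex.conj_im, hμre, hμim]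
    ring
  · rw [Complex.im_sum, h2]
    refine Finset.sum_congr rfl fun j _ => ?_
    simp only [Complex.add_re, Complex.add_im, Complex.sub_re, Complex.sub_im,
      Complex.mul_re, Complex.mul_im, Complex.I_re, Complex.I_im,
      Complex.star_def, Complex.conj_re, Complex.conj_im, hμre, hμim]
    ring
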